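/- Every d-dimensional SSURDO infinite word is uniformly recurrent (UR). -/
import Mathlib


/-- A unidimensional infinite word is uniformly recurrent if for every length `n`
there is a bound `b` such that every length-`b` factor contains every length-`n` factor. -/
def UniformlyRecurrent {A : Type*} (w : ℕ → A) : Prop :=
  ∀ n : ℕ, ∃ b : ℕ, ∀ p m : ℕ, ∃ k : ℕ,
    m ≤ k ∧ k + n ≤ m + b ∧ ∀ j < n, w (k + j) = w (p + j)

/-- The word along direction `q` with respect to size `s` in the `d`-dimensional word `w`:
its `ℓ`-th letter is the block of size `s` at position `ℓ • q`. -/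
def dirWord {d : ℕ} {A : Type*} (w : (Fin d → ℕ) → A) (q s : Fin d → ℕ) :
    ℕ → ({i : Fin d → ℕ // ∀ j, i j < s j} → A) :=
  fun ℓ i => w (fun j => i.1 j + ℓ * q j)

/-- Uniformly recurrent along all directions. -/
def IsURD {d : ℕ} {A : Type*} (w : (Fin d → ℕ) → A) : Prop :=
  ∀ s q : Fin d → ℕ, Finset.univ.gcd q = 1 →
    ∃ b : ℕ, ∀ m : ℕ, ∃ k : ℕ, m ≤ k ∧ k < m + b ∧
      dirWord w q s k = dirWord w q s 0

/-- Strongly uniformly recurrent along all directions: the bound depends only on the size. -/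
def IsSURD {d : ℕ} {A : Type*} (w : (Fin d → ℕ) → A) : Prop :=
  ∀ s : Fin d → ℕ, ∃ b : ℕ, ∀ q : Fin d → ℕ, Finset.univ.gcd q = 1 →
    ∀ m : ℕ, ∃ k : ℕ, m ≤ k ∧ k < m + b ∧
      dirWord w q s k = dirWord w q s 0

/-- Super strongly uniformly recurrent along all directions from any origin. -/
def IsSSURDO {d : ℕ} {A : Type*} (w : (Fin d → ℕ) → A) : Prop :=
  ∀ s : Fin d → ℕ, ∃ b : ℕ, ∀ q : Fin d → ℕ, Finset.univ.gcd q = 1 →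
    ∀ p : Fin d → ℕ, ∀ m : ℕ, ∃ k : ℕ, m ≤ k ∧ k < m + b ∧
      dirWord (fun i => w (fun j => i j + p j)) q s k =
        dirWord (fun i => w (fun j => i j + p j)) q s 0

/-- Uniform recurrence for `d`-dimensional words: every prefix of size `s` occurs
in every factor of size `(b,…,b)`. -/
def IsUR {d : ℕ} {A : Type*} (w : (Fin d → ℕ) → A) : Prop :=
  ∀ s : Fin d → ℕ, ∃ b : ℕ, ∀ p : Fin d → ℕ, ∃ r : Fin d → ℕ,
    (∀ j, p j ≤ r j ∧ r j + s j ≤ p j + b) ∧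
    ∀ i : Fin d → ℕ, (∀ j, i j < s j) → w (fun j => r j + i j) = w i

theorem stmt_11 {d : ℕ} {A : Type*} [Finite A] (w : (Fin d → ℕ) → A)
    (hw : IsSSURDO w) : IsUR w := by
  intro s
  obtain ⟨b, hb⟩ := hw s
  refine ⟨b + ∑ j, s j, ?_⟩
  intro p
  have key : ∀ t : Finset (Fin d), ∃ r : Fin d → ℕ,
      (∀ j ∈ t, p j ≤ r j ∧ r j < p j + b) ∧ (∀ j ∉ t, r j = 0) ∧
      ∀ i : Fin d → ℕ, (∀ j, i j < s j) → w (fun j => r j + i j) = w i := by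
    intro t
    induction t using Finset.induction_on with
    | empty =>
      exact ⟨0, by simp, fun j _ => rfl, fun i hi => by simp⟩
    | @insert a t ha ih =>
      obtain ⟨r, hr1, hr2, hr3⟩ := ih
      set q : Fin d → ℕ := fun j => if j = a then 1 else 0 with hq
      have hgcd : Finset.univ.gcd q = 1 := by
        have h1 : Finset.univ.gcd q ∣ q a := Finset.gcd_dvd (Finset.mem_univ a)
        simp only [hq, if_pos rfl] at h1
        exact Nat.dvd_one.mp h1
      obtain ⟨k, hk1, hk2, hk3⟩ := hb q hgcd r (p a)
      refine ⟨fun j => r j + k * q j, ?_, ?_, ?_⟩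
      · intro j hj
        rcases Finset.mem_insert.mp hj with h | h
        · subst h
          have hra : r j = 0 := hr2 j ha
          simp [hq, hra, hk1, hk2]
        · have hja : j ≠ a := fun e => ha (e ▸ h)
          simp only [hq, if_neg hja, Nat.mul_zero, Nat.add_zero]
          exact hr1 j h
      · intro j hj
        have hja : j ≠ a := fun e => hj (e ▸ Finset.mem_insert_self a t)
        have hjt : j ∉ t := fun e => hj (Finset.mem_insert_of_mem e)
        simp [hq, if_neg hja, hr2 j hjt]
      · intro i hi
        have := congrFun hk3 ⟨i, hi⟩
        simp only [dirWord] at this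
        calc w (fun j => r j + k * q j + i j)
            = w (fun j => i j + k * q j + r j) := by
              congr 1; funext j; ring
          _ = w (fun j => i j + 0 * q j + r j) := this
          _ = w (fun j => r j + i j) := by congr 1; funext j; ring
          _ = w i := hr3 i hi
  obtain ⟨r, hr1, _, hr3⟩ := key Finset.univ
  refine ⟨r, fun j => ⟨(hr1 j (Finset.mem_univ j)).1, ?_⟩, hr3⟩
  have h1 : r j < p j + b := (hr1 j (Finset.mem_univ j)).2
  have h2 : s j ≤ ∑ j, s j := Finset.single_le_sum (fun _ _ => Nat.zero_le _) (Finset.mem_univ j)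
  omega
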